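/- If A_1,...,A_n and B_1,...,B_n are vectors in a complex Hilbert space, then the absolute value of the determinant of the n×n matrix with entries ⟨A_i, B_j⟩ is at most the product over i of ‖A_i‖·‖B_i‖. -/

import Mathlib

open scoped BigOperators

open Finset

open InnerProductSpace

/-- Helper instance: `WellFoundedLT (Fin n)` along the `LinearOrder`-derived `LT`,
needed for `gramSchmidt` to elaborate with index type `Fin n`. -/
instance gramHadamard_wf (n : ℕ) : @WellFoundedLT (Fin n)
    (@Preorder.toLT _ (@PartialOrder.toPreorder _ (@SemilatticeInf.toPartialOrder _
      (@Lattice.toSemilatticeInf _ (@DistribLattice.toLattice _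
        (instDistribLatticeOfLinearOrder (α := Fin n))))))) :=
  inferInstanceAs (WellFoundedLT (Fin n))

section aux

variable {E : Type*} [NormedAddCommGroup E] [InnerProductSpace ℂ E] {n : ℕ}

local notation "⟪" x ", " y "⟫" => @inner ℂ _ _ x y

/-- Gram–Schmidt does not increase norms. -/
lemma gs_norm_le (f : Fin n → E) (i : Fin n) :
    ‖gramSchmidt ℂ f i‖ ≤ ‖f i‖ := by
  set g := gramSchmidt ℂ f with hg
  set r := ∑ k ∈ Iio i, (⟪g k, f i⟫ / (‖g k‖ : ℂ) ^ 2) • g k with hr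
  have hfi : f i = g i + r := gramSchmidt_def'' ℂ f i
  have horth : ⟪g i, r⟫ = 0 := by
    rw [hr, inner_sum]
    apply Finset.sum_eq_zero
    intro k hk
    have hki : k < i := mem_Iio.mp hk
    rw [inner_smul_right, hg, gramSchmidt_orthogonal ℂ f hki.ne', mul_zero]
  have := norm_add_sq_eq_norm_sq_add_norm_sq_of_inner_eq_zero (g i) r horth
  rw [← hfi] at this
  nlinarith [norm_nonneg (g i), norm_nonneg r, norm_nonneg (f i)]

/-- Row operations: replacing the first family by its Gram–Schmidt
orthogonalization does not change the determinant. -/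
lemma det_gs_left (A B : Fin n → E) :
    (Matrix.of fun i j => (⟪A i, B j⟫ : ℂ)).det
      = (Matrix.of fun i j => (⟪gramSchmidt ℂ A i, B j⟫ : ℂ)).det := by
  set g := gramSchmidt ℂ A with hg
  set c : Fin n → Fin n → ℂ := fun i k =>
    if k = i then 1 else if k < i then ⟪g k, A i⟫ / (‖g k‖ : ℂ) ^ 2 else 0 with hc
  have hA : ∀ i, A i = ∑ k, c i k • g k := by
    intro i
    have h1 : ∑ k, c i k • g k = ∑ k ∈ Iic i, c i k • g k := by
      symm
      apply Finset.sum_subset (Finset.subset_univ _)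
      intro k _ hk
      have hik : i < k := by simpa using hk
      simp [hc, hik.ne', (lt_asymm hik : ¬ k < i)]
    rw [h1, ← Finset.Iio_insert, Finset.sum_insert (by simp)]
    have h2 : c i i = 1 := by simp [hc]
    rw [h2, one_smul]
    nth_rewrite 1 [gramSchmidt_def'' ℂ A i]
    congr 1
    apply Finset.sum_congr rfl
    intro k hk
    have hk' : k < i := mem_Iio.mp hk
    simp [hc, hk'.ne, hk', hg]
  have key : (Matrix.of fun i j => (⟪A i, B j⟫ : ℂ))
      = (Matrix.of fun i k => (starRingEnd ℂ) (c i k)) *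
        (Matrix.of fun k j => (⟪g k, B j⟫ : ℂ)) := by
    ext i j
    simp only [Matrix.mul_apply, Matrix.of_apply]
    conv_lhs => rw [hA i]
    rw [sum_inner]
    simp [inner_smul_left]
  rw [key, Matrix.det_mul]
  have hdet1 : (Matrix.of fun i k => (starRingEnd ℂ) (c i k)).det = 1 := by
    rw [Matrix.det_of_lowerTriangular]
    · apply Finset.prod_eq_one
      intro i _
      simp [hc]
    · intro i k h
      have hik : i < k := h
      simp [hc, hik.ne', (lt_asymm hik : ¬ k < i)]
  rw [hdet1, one_mul]

lemma det_swap (A B : Fin n → E) :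
    (Matrix.of fun i j => (⟪A i, B j⟫ : ℂ)).det
      = star (Matrix.of fun i j => (⟪B i, A j⟫ : ℂ)).det := by
  rw [← Matrix.det_conjTranspose]
  congr 1
  ext i j
  simp [Matrix.conjTranspose_apply, inner_conj_symm]

/-- Column operations. -/
lemma det_gs_right (A B : Fin n → E) :
    (Matrix.of fun i j => (⟪A i, B j⟫ : ℂ)).det
      = (Matrix.of fun i j => (⟪A i, gramSchmidt ℂ B j⟫ : ℂ)).det := by
  rw [det_swap A B, det_gs_left B A, ← det_swap A (gramSchmidt ℂ B)]

end aux

/-- Gram–Hadamard inequality: for vectors `A i`, `B j` in a complex Hilbert space,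
the determinant of the Gram-type matrix `⟪A i, B j⟫` is bounded by `∏ i, ‖A i‖ * ‖B i‖`. -/
theorem gram_hadamard {E : Type*} [NormedAddCommGroup E] [InnerProductSpace ℂ E]
    [CompleteSpace E] {n : ℕ} (A B : Fin n → E) :
    ‖(Matrix.of fun i j => (inner ℂ (A i) (B j) : ℂ)).det‖ ≤ ∏ i, ‖A i‖ * ‖B i‖ := by
  classical
  set g := gramSchmidt ℂ A with hg
  rw [det_gs_left A B]
  rw [Finset.prod_mul_distrib]
  by_cases hzero : ∃ i, g i = 0
  · obtain ⟨i, hi⟩ := hzero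
    rw [Matrix.det_eq_zero_of_row_eq_zero i (fun j => by rw [Matrix.of_apply, ← hg, hi, inner_zero_left])]
    simp only [norm_zero]
    positivity
  push_neg at hzero
  set u : Fin n → E := fun i => ((‖g i‖ : ℂ))⁻¹ • g i with hu
  have hon : Orthonormal ℂ u := by
    rw [orthonormal_iff_ite]
    intro i j
    by_cases h : i = j
    · subst h
      have hnu : ‖u i‖ = 1 := by
        have h0 : ‖g i‖ ≠ 0 := norm_ne_zero_iff.mpr (hzero i)
        have : ‖((‖g i‖ : ℂ))⁻¹‖ = ‖g i‖⁻¹ := by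
          simp [abs_of_nonneg (norm_nonneg (g i))]
        rw [hu]
        simp only [norm_smul, this]
        exact inv_mul_cancel₀ h0
      rw [if_pos rfl, inner_self_eq_norm_sq_to_K, hnu]
      norm_num
    · simp [hu, inner_smul_left, inner_smul_right, hg,
        gramSchmidt_orthogonal ℂ A h, h]
  have hfac : (Matrix.of fun i j => (inner ℂ (g i) (B j) : ℂ))
      = Matrix.diagonal (fun i => (‖g i‖ : ℂ)) *
        (Matrix.of fun i j => (inner ℂ (u i) (B j) : ℂ)) := by
    ext i j
    rw [Matrix.diagonal_mul]
    simp only [Matrix.of_apply, hu, inner_smul_left, map_inv₀, Complex.conj_ofReal]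
    have : (‖g i‖ : ℂ) ≠ 0 := by simpa using (norm_ne_zero_iff.mpr (hzero i))
    field_simp
  rw [hfac, Matrix.det_mul, Matrix.det_diagonal, norm_mul, norm_prod]
  set N := (Matrix.of fun i j => (inner ℂ (u i) (B j) : ℂ)) with hN
  set C : Fin n → E := fun j => ∑ i, (inner ℂ (u i) (B j) : ℂ) • u i with hC
  have honite := orthonormal_iff_ite.mp hon
  have hCC' : ∀ j l, (inner ℂ (C j) (C l) : ℂ)
      = ∑ i, (starRingEnd ℂ) (inner ℂ (u i) (B j) : ℂ) * (inner ℂ (u i) (B l) : ℂ) := by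
    intro j l
    simp only [hC]
    exact hon.inner_sum (fun i => (inner ℂ (u i) (B j) : ℂ))
      (fun i => (inner ℂ (u i) (B l) : ℂ)) Finset.univ
  have hNC : N.conjTranspose * N = Matrix.of fun j l => (inner ℂ (C j) (C l) : ℂ) := by
    ext j l
    rw [Matrix.mul_apply, Matrix.of_apply, hCC' j l]
    apply Finset.sum_congr rfl
    intro i _
    rw [hN]
    simp only [Matrix.conjTranspose_apply, Matrix.of_apply]
    rfl
  have hdet2 : (‖N.det‖ ^ 2 : ℝ)
      = ‖(Matrix.of fun j l => (inner ℂ (C j) (C l) : ℂ)).det‖ := by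
    rw [← hNC, Matrix.det_mul, Matrix.det_conjTranspose, norm_mul, norm_star, sq]
  have hCC : (Matrix.of fun j l => (inner ℂ (C j) (C l) : ℂ)).det
      = ∏ j, ((‖gramSchmidt ℂ C j‖ : ℂ)) ^ 2 := by
    rw [det_gs_left C C, det_gs_right (gramSchmidt ℂ C) C]
    have : (Matrix.of fun i j => (inner ℂ (gramSchmidt ℂ C i) (gramSchmidt ℂ C j) : ℂ))
        = Matrix.diagonal (fun i => ((‖gramSchmidt ℂ C i‖ : ℂ)) ^ 2) := by
      ext i j
      by_cases h : i = j
      · subst h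
        simp [Matrix.diagonal_apply_eq, inner_self_eq_norm_sq_to_K]
      · simp [Matrix.diagonal_apply_ne _ h, gramSchmidt_orthogonal ℂ C h]
    rw [this, Matrix.det_diagonal]
  have hCB : ∀ j, ‖C j‖ ^ 2 ≤ ‖B j‖ ^ 2 := by
    intro j
    have e1 : (inner ℂ (C j) (C j) : ℂ) = ∑ i, ((‖(inner ℂ (u i) (B j) : ℂ)‖ : ℝ) ^ 2 : ℂ) := by
      rw [hCC' j j]
      apply Finset.sum_congr rfl
      intro i _
      exact RCLike.conj_mul _
    have e2 : ‖C j‖ ^ 2 = ∑ i, ‖(inner ℂ (u i) (B j) : ℂ)‖ ^ 2 := by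
      have h3 : ((‖C j‖ : ℝ) ^ 2 : ℂ) = (inner ℂ (C j) (C j) : ℂ) :=
        (inner_self_eq_norm_sq_to_K (𝕜 := ℂ) (C j)).symm
      rw [e1] at h3
      exact_mod_cast h3
    rw [e2]
    exact hon.sum_inner_products_le (B j)
  have hNdet : ‖N.det‖ ≤ ∏ j, ‖B j‖ := by
    have h1 : ‖N.det‖ ^ 2 ≤ (∏ j, ‖B j‖) ^ 2 := by
      rw [hdet2, hCC, norm_prod, ← Finset.prod_pow]
      apply Finset.prod_le_prod
      · intro j _; positivity
      · intro j _
        have : ‖((‖gramSchmidt ℂ C j‖ : ℂ)) ^ 2‖ = ‖gramSchmidt ℂ C j‖ ^ 2 := by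
          rw [norm_pow, Complex.norm_real, norm_norm]
        rw [this]
        calc ‖gramSchmidt ℂ C j‖ ^ 2 ≤ ‖C j‖ ^ 2 := by
              have := gs_norm_le C j
              have h0 := norm_nonneg (gramSchmidt ℂ C j)
              nlinarith
          _ ≤ ‖B j‖ ^ 2 := hCB j
    have h2 : (0:ℝ) ≤ ∏ j, ‖B j‖ := Finset.prod_nonneg fun j _ => norm_nonneg _
    nlinarith [norm_nonneg N.det]
  have hgA : ∏ i, ‖((‖g i‖ : ℂ))‖ ≤ ∏ i, ‖A i‖ := by
    apply Finset.prod_le_prod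
    · intro i _; positivity
    · intro i _
      rw [Complex.norm_real, norm_norm]
      exact gs_norm_le A i
  calc (∏ i, ‖((‖g i‖ : ℂ))‖) * ‖N.det‖
      ≤ (∏ i, ‖A i‖) * ∏ j, ‖B j‖ := by
        apply mul_le_mul hgA hNdet (norm_nonneg _)
        exact Finset.prod_nonneg fun i _ => norm_nonneg _
    _ = (∏ i, ‖A i‖) * ∏ i, ‖B i‖ := rfl
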